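/- arXiv:1911.09628 — 4 statements merged into one kernel-verified Lean document; each statement's English description precedes it below -/
import Mathlib

section
/- Let (Ω, μ) be a finite measure space, let ν > 0, and let a ≤ b be real numbers. Let p ∈ L²(μ) and let u : Ω → ℝ be measurable with a ≤ u(x) ≤ b for μ-a.e. x (so u ∈ L²(μ)). Then the following are equivalent: (i) for every measurable v : Ω → ℝ with a ≤ v(x) ≤ b μ-a.e., one has ∫_Ω (p(x) + ν·u(x))·(v(x) − u(x)) dμ(x) ≥ 0; (ii) u(x) = Π_{[a,b]}(−p(x)/ν) for μ-a.e. x ∈ Ω. -/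
open MeasureTheory

/-- The projection of `ℝ` onto the interval `[a, b]`: `Π_{[a,b]}(s) = min b (max a s)`. -/
def projInterval (a b s : ℝ) : ℝ := min b (max a s)

lemma projInterval_mem {a b : ℝ} (hab : a ≤ b) (s : ℝ) :
    a ≤ projInterval a b s ∧ projInterval a b s ≤ b := by
  unfold projInterval
  exact ⟨le_min hab (le_max_left a s), min_le_left _ _⟩

lemma projInterval_key {a b c t : ℝ} (hab : a ≤ b) (hc : a ≤ c ∧ c ≤ b) :
    (t - projInterval a b t) * (c - projInterval a b t) ≤ 0 := by
  unfold projInterval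
  rcases le_total t a with h1 | h1
  · rw [max_eq_left h1, min_eq_right hab]
    nlinarith [hc.1]
  · rw [max_eq_right h1]
    rcases le_total t b with h2 | h2
    · rw [min_eq_right h2]; simp
    · rw [min_eq_left h2]
      nlinarith [hc.2]

lemma memL2_mul_integrable {Ω : Type*} [MeasurableSpace Ω] {μ : Measure Ω}
    {f g : Ω → ℝ} (hf : MemLp f 2 μ) (hg : MemLp g 2 μ) :
    Integrable (fun x => f x * g x) μ := by
  have h : MemLp (f • g) 1 μ := by
    have : ENNReal.HolderTriple 2 2 1 := ⟨by rw [inv_one]; exact ENNReal.inv_two_add_inv_two⟩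
    exact hg.smul hf
  exact memLp_one_iff_integrable.mp h

/-- On a finite measure space, for `ν > 0`, `a ≤ b`, `p ∈ L²(μ)` and a measurable `u`
with `a ≤ u ≤ b` a.e., the variational inequality
`∫ (p + ν u)(v - u) dμ ≥ 0` for all admissible `v` holds iff
`u = Π_{[a,b]}(-p/ν)` a.e. -/
theorem integral_variational_inequality_iff_projection
    {Ω : Type*} [MeasurableSpace Ω] (μ : Measure Ω) [IsFiniteMeasure μ]
    (ν a b : ℝ) (hν : 0 < ν) (hab : a ≤ b)
    (p u : Ω → ℝ) (hpm : Measurable p) (hp : MemLp p 2 μ)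
    (hum : Measurable u) (hu : ∀ᵐ x ∂μ, a ≤ u x ∧ u x ≤ b) :
    (∀ v : Ω → ℝ, Measurable v → (∀ᵐ x ∂μ, a ≤ v x ∧ v x ≤ b) →
        0 ≤ ∫ x, (p x + ν * u x) * (v x - u x) ∂μ) ↔
      (∀ᵐ x ∂μ, u x = projInterval a b (-(p x) / ν)) := by
  set t : Ω → ℝ := fun x => -(p x) / ν with ht
  set w : Ω → ℝ := fun x => projInterval a b (t x) with hw
  have hwm : Measurable w :=
    measurable_const.min (measurable_const.max (hpm.neg.div_const ν))
  have hpx : ∀ x, p x = -(ν * t x) := fun x => by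
    simp only [ht]; field_simp
  have hwb : ∀ x, a ≤ w x ∧ w x ≤ b := fun x => projInterval_mem hab (t x)
  have hbd : ∀ {f : Ω → ℝ}, (∀ᵐ x ∂μ, a ≤ f x ∧ f x ≤ b) → AEStronglyMeasurable f μ →
      MemLp f 2 μ := by
    intro f hf hfm
    refine MemLp.of_bound hfm (max |a| |b|) ?_
    filter_upwards [hf] with x ⟨h1, h2⟩
    rw [Real.norm_eq_abs, abs_le]
    constructor
    · calc -(max |a| |b|) ≤ -|a| := by simp
        _ ≤ a := neg_abs_le a
        _ ≤ f x := h1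
    · calc f x ≤ b := h2
        _ ≤ |b| := le_abs_self b
        _ ≤ max |a| |b| := le_max_right _ _
  have hu2 : MemLp u 2 μ := hbd hu hum.aestronglyMeasurable
  have hw2 : MemLp w 2 μ := hbd (Filter.Eventually.of_forall hwb) hwm.aestronglyMeasurable
  have hpu2 : MemLp (fun x => p x + ν * u x) 2 μ := hp.add (hu2.const_mul ν)
  constructor
  · intro H
    have hvi := H w hwm (Filter.Eventually.of_forall hwb)
    have hptwise : ∀ᵐ x ∂μ, (p x + ν * u x) * (w x - u x) ≤ -ν * (w x - u x)^2 := by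
      filter_upwards [hu] with x hux
      have hkey : (t x - w x) * (u x - w x) ≤ 0 := projInterval_key hab hux
      rw [hpx x]
      nlinarith [mul_nonneg hν.le (neg_nonneg.mpr hkey)]
    have hint1 : Integrable (fun x => (p x + ν * u x) * (w x - u x)) μ :=
      memL2_mul_integrable hpu2 (hw2.sub hu2)
    have hsq_int : Integrable (fun x => (w x - u x)^2) μ := by
      refine (memL2_mul_integrable (hw2.sub hu2) (hw2.sub hu2)).congr ?_
      filter_upwards with x
      simp [Pi.sub_apply]; ring
    have hint2 : Integrable (fun x => -ν * (w x - u x)^2) μ := hsq_int.const_mul (-ν)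
    have hle : ∫ x, (p x + ν * u x) * (w x - u x) ∂μ ≤ ∫ x, -ν * (w x - u x)^2 ∂μ :=
      integral_mono_ae hint1 hint2 hptwise
    have hineq : ν * ∫ x, (w x - u x)^2 ∂μ ≤ 0 := by
      have h := le_trans hvi hle
      rw [integral_const_mul] at h
      linarith
    have hnn : 0 ≤ ∫ x, (w x - u x)^2 ∂μ := integral_nonneg (fun x => sq_nonneg _)
    have hzero : ∫ x, (w x - u x)^2 ∂μ = 0 := by nlinarith
    have hae := (integral_eq_zero_iff_of_nonneg_ae
      (Filter.Eventually.of_forall (fun x => sq_nonneg (w x - u x))) hsq_int).mp hzero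
    filter_upwards [hae] with x hx
    have h0 : (w x - u x)^2 = 0 := hx
    have := pow_eq_zero_iff (n := 2) (by norm_num) |>.mp h0
    have := sub_eq_zero.mp this
    exact this.symm
  · intro H v hvm hv
    refine integral_nonneg_of_ae ?_
    filter_upwards [H, hv] with x hx hvx
    have hkey : (t x - w x) * (v x - w x) ≤ 0 := projInterval_key hab hvx
    have hxw : u x = w x := hx
    simp only [Pi.zero_apply]
    rw [hxw, hpx x]
    nlinarith [mul_nonneg hν.le (neg_nonneg.mpr hkey)]
end

section
/- Let ν > 0, τ > 0, and let a ≤ b be real numbers. Let p, q ∈ ℝ satisfy 2·|p − q| ≤ τ, and set u := Π_{[a,b]}(−p/ν) and v := Π_{[a,b]}(−q/ν). If p + ν·u > τ, then u = v = a; if p + ν·u < −τ, then u = v = b. In particular, whenever |p + ν·u| > τ one has v = u. -/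
/-- Pointwise critical-cone property: if `2|p - q| ≤ τ`, `u = Π_{[a,b]}(-p/ν)` and
`v = Π_{[a,b]}(-q/ν)`, then `p + ν u > τ` forces `u = v = a`, `p + ν u < -τ` forces
`u = v = b`, and in particular `|p + ν u| > τ` implies `v = u`. -/
theorem projection_critical_cone_pointwise
    (ν τ a b p q u v : ℝ) (hν : 0 < ν) (hτ : 0 < τ) (hab : a ≤ b)
    (hpq : 2 * |p - q| ≤ τ)
    (hu : u = projInterval a b (-p / ν)) (hv : v = projInterval a b (-q / ν)) :
    (τ < p + ν * u → u = a ∧ v = a) ∧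
      (p + ν * u < -τ → u = b ∧ v = b) ∧
      (τ < |p + ν * u| → v = u) := by
  have hq1 : p - q ≤ τ / 2 := by have := abs_le.mp (by linarith [hpq] : |p - q| ≤ τ / 2); linarith [this.2]
  have hq2 : -(τ/2) ≤ p - q := by have := abs_le.mp (by linarith [hpq] : |p - q| ≤ τ / 2); linarith [this.1]
  simp only [projInterval] at hu hv
  have case1 : τ < p + ν * u → u = a ∧ v = a := by
    intro h
    have hpa : -p / ν < a := by
      by_contra hcon
      push_neg at hcon
      have hmax : max a (-p / ν) = -p / ν := max_eq_right hcon
      have hub : u ≤ -p / ν := by rw [hu, hmax]; exact min_le_right _ _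
      have h' : u * ν ≤ -p := (le_div_iff₀ hν).mp hub
      have : ν * u ≤ -p := by nlinarith
      linarith
    have hua : u = a := by
      rw [hu, max_eq_left hpa.le, min_eq_right hab]
    have hpa' : τ < p + ν * a := by rw [hua] at h; exact h
    have hqa : -q / ν < a := by
      rw [div_lt_iff₀ hν]
      nlinarith
    have hva : v = a := by rw [hv, max_eq_left hqa.le, min_eq_right hab]
    exact ⟨hua, hva⟩
  have case2 : p + ν * u < -τ → u = b ∧ v = b := by
    intro h
    have hpb : b < -p / ν := by
      by_contra hcon
      push_neg at hcon
      have hub : -p / ν ≤ u := by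
        rw [hu]
        exact le_min hcon (le_max_right _ _)
      have h' : -p ≤ u * ν := (div_le_iff₀ hν).mp hub
      have : -p ≤ ν * u := by nlinarith
      linarith
    have hub : u = b := by
      rw [hu, max_eq_right (le_trans hab hpb.le), min_eq_left hpb.le]
    have hpb' : p + ν * b < -τ := by rw [hub] at h; exact h
    have hqb : b < -q / ν := by
      rw [lt_div_iff₀ hν]
      nlinarith
    have hvb : v = b := by
      rw [hv, max_eq_right (le_trans hab hqb.le), min_eq_left hqb.le]
    exact ⟨hub, hvb⟩
  refine ⟨case1, case2, fun habs => ?_⟩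
  rcases lt_abs.mp habs with h | h
  · obtain ⟨h1, h2⟩ := case1 h
    rw [h1, h2]
  · obtain ⟨h1, h2⟩ := case2 (by linarith)
    rw [h1, h2]
end

section
/- Let (Ω, μ) be a finite measure space, let ν, μ₀, τ, C > 0, and let a ≤ b be real numbers. Let p̄, p̄_T : Ω → ℝ be bounded measurable functions whose difference satisfies ess sup_Ω |p̄ − p̄_T| ≤ min(ν·μ₀/(2C), τ/2). Define ū := Π_{[a,b]}(−p̄/ν) and ũ := Π_{[a,b]}(−p̄_T/ν) pointwise (these are bounded, hence in L²(μ)), and set d := ũ − ū. Let j′ : L²(μ) → (L²(μ) →L[ℝ] ℝ) and assume there is a bilinear-form-valued second derivative along the segment, i.e., for each t ∈ [0,1] a real number Q(t) =: j″(ū + t·d)(d, d) such that t ↦ j′(ū + t·d)(d) is differentiable on [0,1] with derivative Q(t). Assume moreover: (i) (second-order condition) j″(ū)(v, v) ≥ μ₀·‖v‖²_{L²(μ)} for every v in the critical cone C_ū^τ; (ii) (perturbation estimate) |Q(t) − Q(0)| ≤ C · (ess sup_Ω |t·d|) · ‖d‖²_{L²(μ)} for all t ∈ [0,1], where j″(ū)(d,d)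 = Q(0). Then d = ũ − ū belongs to C_ū^τ and (μ₀/2)·‖ū − ũ‖²_{L²(μ)} ≤ (j′(ũ) − j′(ū))(ũ − ū). -/
open MeasureTheory

lemma projInterval_lip (a b s t : ℝ) :
    |projInterval a b s - projInterval a b t| ≤ |s - t| := by
  unfold projInterval
  have h1 : |min b (max a s) - min b (max a t)| ≤ max |b - b| |max a s - max a t| :=
    abs_min_sub_min_le_max b (max a s) b (max a t)
  simp only [sub_self, abs_zero] at h1
  have h2 : |max a s - max a t| ≤ |s - t| := by
    rw [max_comm a s, max_comm a t]; exact abs_max_sub_max_le_abs s t a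
  exact h1.trans (max_le ((abs_nonneg _).trans h2) h2)

lemma projInterval_mem_left (a b s : ℝ) (hab : a ≤ b) : a ≤ projInterval a b s :=
  le_min hab (le_max_left _ _)

lemma projInterval_mem_right (a b s : ℝ) : projInterval a b s ≤ b :=
  min_le_left _ _

lemma projInterval_far (ν τ a b p q : ℝ) (hν : 0 < ν) (hτ : 0 < τ) (hab : a ≤ b)
    (hpq : |p - q| ≤ τ / 2) (h : τ < |p + ν * projInterval a b (-p / ν)|) :
    projInterval a b (-q / ν) = projInterval a b (-p / ν) := by
  set s := -p / ν with hs
  set t := -q / ν with ht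
  have hνs : ν * s = -p := by rw [hs]; field_simp
  have hνt : ν * t = -q := by rw [ht]; field_simp
  have hst : ν * (t - s) = p - q := by rw [mul_sub, hνs, hνt]; ring
  have habs : |ν * (t - s)| ≤ τ / 2 := by rw [hst]; exact hpq
  by_cases h1 : s < a
  · have hpr : projInterval a b s = a := by
      unfold projInterval; rw [max_eq_left h1.le, min_eq_right hab]
    rw [hpr] at h
    have heq : p + ν * a = ν * (a - s) := by rw [mul_sub, hνs]; ring
    have hpos : 0 < ν * (a - s) := mul_pos hν (by linarith)
    rw [heq, abs_of_pos hpos] at h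
    have h2 : ν * (t - s) ≤ τ / 2 := (le_abs_self _).trans habs
    have htlt : t < a := by
      have : ν * t < ν * a := by nlinarith
      exact lt_of_mul_lt_mul_left this hν.le
    rw [hpr]; unfold projInterval; rw [max_eq_left htlt.le, min_eq_right hab]
  · by_cases h2 : b < s
    · have hpr : projInterval a b s = b := by
        unfold projInterval
        rw [max_eq_right (by linarith : a ≤ s), min_eq_left h2.le]
      rw [hpr] at h
      have heq : p + ν * b = -(ν * (s - b)) := by rw [mul_sub, hνs]; ring
      have hpos : 0 < ν * (s - b) := mul_pos hν (by linarith)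
      rw [heq, abs_neg, abs_of_pos hpos] at h
      have h3' : -(τ / 2) ≤ ν * (t - s) := neg_le_of_abs_le habs
      have htgt : b < t := by
        have : ν * b < ν * t := by nlinarith
        exact lt_of_mul_lt_mul_left this hν.le
      rw [hpr]; unfold projInterval
      rw [max_eq_right (by linarith : a ≤ t), min_eq_left htgt.le]
    · have hpr : projInterval a b s = s := by
        unfold projInterval
        rw [max_eq_right (by linarith : a ≤ s), min_eq_right (by linarith : s ≤ b)]
      rw [hpr] at h
      have : p + ν * s = 0 := by rw [hνs]; ring
      rw [this, abs_zero] at h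
      linarith

/-- Auxiliary estimate (Theorem 4.8 of the paper): if the discrete adjoint `p̄_T` is
close enough to `p̄` in `L^∞`, namely `ess sup |p̄ - p̄_T| ≤ min (ν μ₀ / (2C), τ/2)`,
then `d = ũ - ū ∈ C_ū^τ` and `(μ₀/2) ‖ū - ũ‖²_{L²} ≤ (j'(ũ) - j'(ū))(ũ - ū)`,
where `ū = Π_{[a,b]}(-p̄/ν)`, `ũ = Π_{[a,b]}(-p̄_T/ν)`, `j''(ū) = B` satisfies the
second-order condition on the critical cone, and `Q(t) = j''(ū + t d)(d,d)` is the
derivative of `t ↦ j'(ū + t d)(d)` with the stated perturbation bound. -/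
theorem auxiliary_estimate_control_tilde
    {Ω : Type*} [MeasurableSpace Ω] (μ : Measure Ω) [IsFiniteMeasure μ]
    (ν μ₀ τ C a b : ℝ) (hν : 0 < ν) (hμ₀ : 0 < μ₀) (hτ : 0 < τ) (hC : 0 < C)
    (hab : a ≤ b)
    (pbar pT : Ω → ℝ) (hpbarm : Measurable pbar) (hpTm : Measurable pT)
    (hpbarb : ∃ M : ℝ, ∀ x, |pbar x| ≤ M) (hpTb : ∃ M : ℝ, ∀ x, |pT x| ≤ M)
    (hclose : eLpNorm (fun x => pbar x - pT x) ⊤ μ ≤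
      ENNReal.ofReal (min (ν * μ₀ / (2 * C)) (τ / 2)))
    (ubar utilde d : Ω → ℝ)
    (hubar : ubar = fun x => projInterval a b (-(pbar x) / ν))
    (hutilde : utilde = fun x => projInterval a b (-(pT x) / ν))
    (hd : d = utilde - ubar)
    (j' : (Ω → ℝ) → ((Ω → ℝ) →ₗ[ℝ] ℝ))
    (B : (Ω → ℝ) →ₗ[ℝ] (Ω → ℝ) →ₗ[ℝ] ℝ)
    (Q : ℝ → ℝ)
    (hderiv : ∀ t ∈ Set.Icc (0 : ℝ) 1,
      HasDerivAt (fun s : ℝ => j' (ubar + s • d) d) (Q t) t)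
    (hQ0 : Q 0 = B d d)
    (hsecond : ∀ v : Ω → ℝ, MemLp v 2 μ →
      (∀ᵐ x ∂μ, (ubar x = a → 0 ≤ v x) ∧ (ubar x = b → v x ≤ 0) ∧
        (τ < |pbar x + ν * ubar x| → v x = 0)) →
      μ₀ * ∫ x, v x ^ 2 ∂μ ≤ B v v)
    (hpert : ∀ t ∈ Set.Icc (0 : ℝ) 1,
      |Q t - Q 0| ≤ C * (eLpNorm (fun x => t * d x) ⊤ μ).toReal * ∫ x, d x ^ 2 ∂μ) :
    (MemLp d 2 μ ∧
      (∀ᵐ x ∂μ, (ubar x = a → 0 ≤ d x) ∧ (ubar x = b → d x ≤ 0) ∧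
        (τ < |pbar x + ν * ubar x| → d x = 0))) ∧
      (μ₀ / 2) * ∫ x, (ubar x - utilde x) ^ 2 ∂μ ≤ j' utilde d - j' ubar d := by
  set K := min (ν * μ₀ / (2 * C)) (τ / 2) with hK
  have hK0 : 0 ≤ K := le_min (by positivity) (by positivity)
  -- a.e. closeness
  have hae : ∀ᵐ x ∂μ, |pbar x - pT x| ≤ K := by
    rw [eLpNorm_exponent_top] at hclose
    filter_upwards [enorm_ae_le_eLpNormEssSup (fun x => pbar x - pT x) μ] with x hx
    have h1 : (‖pbar x - pT x‖₊ : ENNReal) ≤ ENNReal.ofReal K := hx.trans hclose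
    rw [← enorm_eq_nnnorm, ← ofReal_norm, Real.norm_eq_abs] at h1
    exact (ENNReal.ofReal_le_ofReal_iff hK0).mp h1
  -- measurability
  have hcontproj : Continuous (projInterval a b) :=
    continuous_const.min (continuous_const.max continuous_id)
  have hum : Measurable ubar := by
    rw [hubar]; exact hcontproj.measurable.comp ((hpbarm.neg).div_const ν)
  have hutm : Measurable utilde := by
    rw [hutilde]; exact hcontproj.measurable.comp ((hpTm.neg).div_const ν)
  have hdm : Measurable d := by rw [hd]; exact hutm.sub hum
  -- L∞ bound on d
  have hdb : ∀ᵐ x ∂μ, |d x| ≤ μ₀ / (2 * C) := by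
    filter_upwards [hae] with x hx
    have h1 : |d x| ≤ |pbar x - pT x| / ν := by
      rw [hd, Pi.sub_apply, hutilde, hubar]
      have := projInterval_lip a b (-(pT x) / ν) (-(pbar x) / ν)
      calc |projInterval a b (-(pT x)/ν) - projInterval a b (-(pbar x)/ν)|
          ≤ |(-(pT x)/ν) - (-(pbar x)/ν)| := this
        _ = |pbar x - pT x| / ν := by
            rw [show (-(pT x)/ν) - (-(pbar x)/ν) = (pbar x - pT x)/ν by ring,
              abs_div, abs_of_pos hν]
    refine h1.trans ?_
    have h2 : |pbar x - pT x| / ν ≤ K / ν := by gcongr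
    refine h2.trans ?_
    rw [div_le_iff₀ hν]
    refine (min_le_left _ _).trans (le_of_eq ?_)
    field_simp
  have hmem : MemLp d 2 μ := by
    refine MemLp.of_bound hdm.aestronglyMeasurable (μ₀ / (2 * C)) ?_
    filter_upwards [hdb] with x hx
    simpa [Real.norm_eq_abs] using hx
  -- critical cone
  have hcone : ∀ᵐ x ∂μ, (ubar x = a → 0 ≤ d x) ∧ (ubar x = b → d x ≤ 0) ∧
      (τ < |pbar x + ν * ubar x| → d x = 0) := by
    filter_upwards [hae] with x hx
    have hxτ : |pbar x - pT x| ≤ τ / 2 := hx.trans (min_le_right _ _)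
    refine ⟨fun ha => ?_, fun hb => ?_, fun hfar => ?_⟩
    · have h1 : a ≤ utilde x := by rw [hutilde]; exact projInterval_mem_left _ _ _ hab
      rw [hd, Pi.sub_apply, ha]; linarith
    · have h1 : utilde x ≤ b := by rw [hutilde]; exact projInterval_mem_right _ _ _
      rw [hd, Pi.sub_apply, hb]; linarith
    · rw [hubar] at hfar
      have h1 : projInterval a b (-(pT x) / ν) = projInterval a b (-(pbar x) / ν) :=
        projInterval_far ν τ a b (pbar x) (pT x) hν hτ hab hxτ (by simpa using hfar)
      rw [hd, Pi.sub_apply, hutilde, hubar]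
      dsimp only
      rw [h1, sub_self]
  -- integrals nonneg and equality
  have hI0 : 0 ≤ ∫ x, d x ^ 2 ∂μ := integral_nonneg fun x => sq_nonneg _
  have hint : ∫ x, (ubar x - utilde x) ^ 2 ∂μ = ∫ x, d x ^ 2 ∂μ := by
    refine integral_congr_ae (Filter.Eventually.of_forall fun x => ?_)
    dsimp only
    rw [hd, Pi.sub_apply]; ring
  have hBdd : μ₀ * ∫ x, d x ^ 2 ∂μ ≤ B d d := hsecond d hmem hcone
  -- lower bound on Q t
  have hQbound : ∀ t ∈ Set.Icc (0:ℝ) 1, μ₀ / 2 * ∫ x, d x ^ 2 ∂μ ≤ Q t := by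
    intro t ht
    have h2 : (eLpNorm (fun x => t * d x) ⊤ μ).toReal ≤ μ₀ / (2 * C) := by
      apply ENNReal.toReal_le_of_le_ofReal (by positivity)
      rw [eLpNorm_exponent_top]
      apply eLpNormEssSup_le_of_ae_bound (C := μ₀ / (2 * C))
      filter_upwards [hdb] with x hx
      rw [Real.norm_eq_abs, abs_mul]
      have hta : |t| ≤ 1 := abs_le.mpr ⟨by linarith [ht.1], ht.2⟩
      nlinarith [abs_nonneg (d x), abs_nonneg t]
    have h3 : |Q t - Q 0| ≤ C * (μ₀ / (2 * C)) * ∫ x, d x ^ 2 ∂μ := by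
      refine (hpert t ht).trans ?_
      gcongr
    have h4 : C * (μ₀ / (2 * C)) = μ₀ / 2 := by field_simp
    rw [h4] at h3
    have h5 := (abs_le.mp h3).1
    rw [hQ0] at *
    linarith
  -- mean value theorem
  have hcont : ContinuousOn (fun s : ℝ => j' (ubar + s • d) d) (Set.Icc 0 1) :=
    fun t ht => ((hderiv t ht).continuousAt).continuousWithinAt
  obtain ⟨c, hc, hceq⟩ := exists_hasDerivAt_eq_slope (fun s : ℝ => j' (ubar + s • d) d) Q
    one_pos hcont (fun t ht => hderiv t (Set.mem_Icc_of_Ioo ht))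
  have hf1 : ubar + (1:ℝ) • d = utilde := by
    funext x; rw [hd]; simp [Pi.add_apply, Pi.sub_apply]
  have hf0 : ubar + (0:ℝ) • d = ubar := by simp
  simp only [hf1, hf0, sub_zero, div_one] at hceq
  refine ⟨⟨hmem, hcone⟩, ?_⟩
  rw [hint]
  calc μ₀ / 2 * ∫ x, d x ^ 2 ∂μ ≤ Q c := hQbound c ⟨hc.1.le, hc.2.le⟩
    _ = j' utilde d - j' ubar d := hceq
end

section
/- Let H be a real inner product space, let U ⊆ H, let ū, ũ ∈ U, let p̄, p̃, p̄_T ∈ H, and let ν > 0 and μ > 0. Assume: (i) ⟨p̄ + ν·ū, u − ū⟩ ≥ 0 for all u ∈ U; (ii) ⟨p̄_T + ν·ũ, u − ũ⟩ ≥ 0 for all u ∈ U; (iii) (μ/2)·‖ũ − ū‖² ≤ ⟨(p̃ + ν·ũ) − (p̄ + ν·ū), ũ − ū⟩. Then (μ/2)·‖ũ − ū‖² ≤ ⟨p̃ − p̄_T, ũ − ū⟩, and consequently ‖ū − ũ‖ ≤ (2/μ)·‖p̃ − p̄_T‖. -/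
open scoped RealInnerProductSpace

/-- Abstract control-error bound: from the continuous and auxiliary variational
inequalities and the second-order estimate, one gets
`(μ/2) ‖ũ - ū‖² ≤ ⟪p̃ - p̄_T, ũ - ū⟫`, hence `‖ū - ũ‖ ≤ (2/μ) ‖p̃ - p̄_T‖`. -/
theorem control_error_bound
    {H : Type*} [NormedAddCommGroup H] [InnerProductSpace ℝ H]
    (U : Set H) (ubar utilde : H) (hubar : ubar ∈ U) (hutilde : utilde ∈ U)
    (pbar ptilde pT : H) (ν μ : ℝ) (hν : 0 < ν) (hμ : 0 < μ)
    (h₁ : ∀ u ∈ U, 0 ≤ ⟪pbar + ν • ubar, u - ubar⟫)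
    (h₂ : ∀ u ∈ U, 0 ≤ ⟪pT + ν • utilde, u - utilde⟫)
    (h₃ : (μ / 2) * ‖utilde - ubar‖ ^ 2 ≤
      ⟪(ptilde + ν • utilde) - (pbar + ν • ubar), utilde - ubar⟫) :
    (μ / 2) * ‖utilde - ubar‖ ^ 2 ≤ ⟪ptilde - pT, utilde - ubar⟫ ∧
      ‖ubar - utilde‖ ≤ (2 / μ) * ‖ptilde - pT‖ := by
  have hA := h₁ utilde hutilde
  have hB := h₂ ubar hubar
  have hBB : ⟪pT + ν • utilde, utilde - ubar⟫ ≤ 0 := by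
    have : ubar - utilde = -(utilde - ubar) := by abel
    rw [this, inner_neg_right] at hB
    linarith
  have key : (μ / 2) * ‖utilde - ubar‖ ^ 2 ≤ ⟪ptilde - pT, utilde - ubar⟫ := by
    have e1 : ⟪(ptilde + ν • utilde) - (pbar + ν • ubar), utilde - ubar⟫
        = ⟪ptilde - pT, utilde - ubar⟫ + ⟪pT + ν • utilde, utilde - ubar⟫
          - ⟪pbar + ν • ubar, utilde - ubar⟫ := by
      rw [← inner_add_left, ← inner_sub_left]
      congr 1
      abel
    rw [e1] at h₃
    linarith
  refine ⟨key, ?_⟩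
  have hCS : ⟪ptilde - pT, utilde - ubar⟫ ≤ ‖ptilde - pT‖ * ‖utilde - ubar‖ :=
    real_inner_le_norm _ _
  have hnorm : ‖ubar - utilde‖ = ‖utilde - ubar‖ := norm_sub_rev _ _
  rw [hnorm]
  rcases eq_or_ne (‖utilde - ubar‖) 0 with h0 | h0
  · rw [h0]
    positivity
  · have hpos : 0 < ‖utilde - ubar‖ := lt_of_le_of_ne (norm_nonneg _) (Ne.symm h0)
    have : (μ / 2) * ‖utilde - ubar‖ ^ 2 ≤ ‖ptilde - pT‖ * ‖utilde - ubar‖ :=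
      key.trans hCS
    have h4 : μ / 2 * ‖utilde - ubar‖ ≤ ‖ptilde - pT‖ := by
      have := (mul_le_mul_iff_of_pos_right hpos).mp (by rw [sq] at this; linarith [this] : (μ / 2 * ‖utilde - ubar‖) * ‖utilde - ubar‖ ≤ ‖ptilde - pT‖ * ‖utilde - ubar‖)
      exact this
    calc ‖utilde - ubar‖ = (2 / μ) * (μ / 2 * ‖utilde - ubar‖) := by field_simp
      _ ≤ (2 / μ) * ‖ptilde - pT‖ := by
          apply mul_le_mul_of_nonneg_left h4; positivity
end
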